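/- Let K be a field and let K⟨D₁,D₂,D₃,D₁',D₂',D₃'⟩ be the free (noncommutative) associative algebra on six generators. If q₃, q₁', q₂', q₃' are elements of this algebra satisfying q₃·(1 − D₂D₃D₁) + q₁'·(D₃D₁ − D₂') + q₂'·(D₁ − D₃'D₃D₁) + q₃'·(1 − D₁'D₁) = 0, then q₃ = q₁' = q₂' = q₃' = 0. -/

import Mathlib

namespace Stmt0Aux

open MonoidAlgebra

noncomputable section

abbrev M6 : Type := FreeMonoid (Fin 6)

def W (K : Type*) [Field K] (w : List (Fin 6)) : MonoidAlgebra K M6 :=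
  MonoidAlgebra.single (FreeMonoid.ofList w) 1

def wt (l : List (Fin 6)) : ℕ := (l.map fun i => if i = 4 then 3 else 1).sum

lemma wt_append (a b : List (Fin 6)) : wt (a ++ b) = wt a + wt b := by
  simp [wt]

variable {K : Type*} [Field K]

lemma coeff_mul_W_eq (f : MonoidAlgebra K M6) (w : List (Fin 6)) (u : M6) :
    (f * W K w).coeff (u * FreeMonoid.ofList w) = f.coeff u := by
  have := MonoidAlgebra.coeff_mul_single_eq_coeff_mul (r := (1 : K))
    (m := FreeMonoid.ofList w) (m₁ := u * FreeMonoid.ofList w) (x := f) u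
    (fun a _ => mul_left_inj _)
  simpa [W] using this

lemma coeff_mul_W_of_not_suffix (f : MonoidAlgebra K M6) {w : List (Fin 6)} {v : M6}
    (h : ¬ w <:+ FreeMonoid.toList v) : (f * W K w).coeff v = 0 := by
  apply MonoidAlgebra.mul_single_apply_of_not_exists_mul
  rintro ⟨d, rfl⟩
  exact h ⟨FreeMonoid.toList d, rfl⟩

lemma term_low (q : MonoidAlgebra K M6) (w : List (Fin 6)) {B N : ℕ}
    (hb : ∀ u ∈ q.coeff.support, wt (FreeMonoid.toList u) + B ≤ N)
    (hw : wt w < B) {v : M6} (hv : wt (FreeMonoid.toList v) = N) :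
    (q * W K w).coeff v = 0 := by
  by_cases hs : w <:+ FreeMonoid.toList v
  · obtain ⟨l, hl⟩ := hs
    have hveq : v = FreeMonoid.ofList l * FreeMonoid.ofList w := by
      apply FreeMonoid.toList.injective
      simp only [FreeMonoid.toList_mul, FreeMonoid.toList_ofList]
      exact hl.symm
    rw [hveq, coeff_mul_W_eq]
    by_contra hne
    have h1 := hb _ (Finsupp.mem_support_iff.mpr hne)
    rw [FreeMonoid.toList_ofList] at h1
    have h2 : wt l + wt w = N := by rw [← wt_append, hl, hv]
    omega
  · exact coeff_mul_W_of_not_suffix q hs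

lemma term_cross (q : MonoidAlgebra K M6) (w L : List (Fin 6)) (u : M6)
    (h1 : ¬ w <:+ L) (h2 : ¬ L <:+ w) :
    (q * W K w).coeff (u * FreeMonoid.ofList L) = 0 := by
  apply coeff_mul_W_of_not_suffix
  intro hs
  rw [show FreeMonoid.toList (u * FreeMonoid.ofList L)
      = FreeMonoid.toList u ++ L from rfl] at hs
  rcases List.suffix_or_suffix_of_suffix hs (List.suffix_append _ _) with h | h
  · exact h1 h
  · exact h2 h

def coeffHom (v : M6) : MonoidAlgebra K M6 →+ K where
  toFun f := f.coeff v
  map_zero' := rfl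
  map_add' f g := Finsupp.add_apply f.coeff g.coeff v

@[simp] lemma coeffHom_apply (v : M6) (f : MonoidAlgebra K M6) : coeffHom v f = f.coeff v := rfl

theorem main (q3 q1' q2' q3' : MonoidAlgebra K M6)
    (h : q3 * (1 - W K [1,2,0]) + q1' * (W K [2,0] - W K [4])
        + q2' * (W K [0] - W K [5,2,0]) + q3' * (1 - W K [3,0]) = 0) :
    q3 = 0 ∧ q1' = 0 ∧ q2' = 0 ∧ q3' = 0 := by
  classical
  have hone : (1 : MonoidAlgebra K M6) = W K [] := by
    simp [W, MonoidAlgebra.one_def]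
  rw [hone] at h
  by_contra hcon
  have hor : q3 ≠ 0 ∨ q1' ≠ 0 ∨ q2' ≠ 0 ∨ q3' ≠ 0 := by tauto
  set T : Finset ℕ :=
      q3.coeff.support.image (fun u => wt (FreeMonoid.toList u) + 3) ∪
      q1'.coeff.support.image (fun u => wt (FreeMonoid.toList u) + 3) ∪
      q2'.coeff.support.image (fun u => wt (FreeMonoid.toList u) + 3) ∪
      q3'.coeff.support.image (fun u => wt (FreeMonoid.toList u) + 2) with hT
  have hTmem3 : ∀ u ∈ q3.coeff.support, wt (FreeMonoid.toList u) + 3 ∈ T := by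
    intro u hu
    simp only [hT, Finset.mem_union, Finset.mem_image]
    exact Or.inl (Or.inl (Or.inl ⟨u, hu, rfl⟩))
  have hTmem1 : ∀ u ∈ q1'.coeff.support, wt (FreeMonoid.toList u) + 3 ∈ T := by
    intro u hu
    simp only [hT, Finset.mem_union, Finset.mem_image]
    exact Or.inl (Or.inl (Or.inr ⟨u, hu, rfl⟩))
  have hTmem2 : ∀ u ∈ q2'.coeff.support, wt (FreeMonoid.toList u) + 3 ∈ T := by
    intro u hu
    simp only [hT, Finset.mem_union, Finset.mem_image]
    exact Or.inl (Or.inr ⟨u, hu, rfl⟩)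
  have hTmem4 : ∀ u ∈ q3'.coeff.support, wt (FreeMonoid.toList u) + 2 ∈ T := by
    intro u hu
    simp only [hT, Finset.mem_union, Finset.mem_image]
    exact Or.inr ⟨u, hu, rfl⟩
  have hTne : T.Nonempty := by
    rcases hor with h0 | h0 | h0 | h0
    · obtain ⟨u, hu⟩ := Finsupp.support_nonempty_iff.mpr (mt MonoidAlgebra.coeff_eq_zero.mp h0)
      exact ⟨_, hTmem3 u hu⟩
    · obtain ⟨u, hu⟩ := Finsupp.support_nonempty_iff.mpr (mt MonoidAlgebra.coeff_eq_zero.mp h0)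
      exact ⟨_, hTmem1 u hu⟩
    · obtain ⟨u, hu⟩ := Finsupp.support_nonempty_iff.mpr (mt MonoidAlgebra.coeff_eq_zero.mp h0)
      exact ⟨_, hTmem2 u hu⟩
    · obtain ⟨u, hu⟩ := Finsupp.support_nonempty_iff.mpr (mt MonoidAlgebra.coeff_eq_zero.mp h0)
      exact ⟨_, hTmem4 u hu⟩
  set N := T.max' hTne with hN
  have hb3 : ∀ u ∈ q3.coeff.support, wt (FreeMonoid.toList u) + 3 ≤ N :=
    fun u hu => T.le_max' _ (hTmem3 u hu)
  have hb1 : ∀ u ∈ q1'.coeff.support, wt (FreeMonoid.toList u) + 3 ≤ N :=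
    fun u hu => T.le_max' _ (hTmem1 u hu)
  have hb2 : ∀ u ∈ q2'.coeff.support, wt (FreeMonoid.toList u) + 3 ≤ N :=
    fun u hu => T.le_max' _ (hTmem2 u hu)
  have hb4 : ∀ u ∈ q3'.coeff.support, wt (FreeMonoid.toList u) + 2 ≤ N :=
    fun u hu => T.le_max' _ (hTmem4 u hu)
  have hmem := T.max'_mem hTne
  rw [← hN] at hmem
  simp only [hT, Finset.mem_union, Finset.mem_image] at hmem
  rcases hmem with (((⟨u, hu, huN⟩ | ⟨u, hu, huN⟩) | ⟨u, hu, huN⟩) | ⟨u, hu, huN⟩)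
  · have hv := congrArg (coeffHom (K := K) (u * FreeMonoid.ofList [1,2,0])) h
    have hwv : wt (FreeMonoid.toList (u * FreeMonoid.ofList ([1,2,0] : List (Fin 6)))) = N := by
      rw [show FreeMonoid.toList (u * FreeMonoid.ofList ([1,2,0] : List (Fin 6)))
          = FreeMonoid.toList u ++ [1,2,0] from rfl, wt_append]
      have : wt ([1,2,0] : List (Fin 6)) = 3 := by decide
      omega
    simp only [mul_sub, map_add, map_sub, map_zero, coeffHom_apply] at hv
    rw [term_low q3 [] hb3 (by decide) hwv,
        coeff_mul_W_eq q3 [1,2,0] u,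
        term_low q1' [2,0] hb1 (by decide) hwv,
        term_cross q1' [4] [1,2,0] u (by decide) (by decide),
        term_low q2' [0] hb2 (by decide) hwv,
        term_cross q2' [5,2,0] [1,2,0] u (by decide) (by decide),
        term_low q3' [] hb4 (by decide) hwv,
        term_cross q3' [3,0] [1,2,0] u (by decide) (by decide)] at hv
    simp only [sub_zero, zero_sub, add_zero, zero_add, neg_eq_zero] at hv
    exact Finsupp.mem_support_iff.mp hu hv
  · have hv := congrArg (coeffHom (K := K) (u * FreeMonoid.ofList [4])) h
    have hwv : wt (FreeMonoid.toList (u * FreeMonoid.ofList ([4] : List (Fin 6)))) = N := by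
      rw [show FreeMonoid.toList (u * FreeMonoid.ofList ([4] : List (Fin 6)))
          = FreeMonoid.toList u ++ [4] from rfl, wt_append]
      have : wt ([4] : List (Fin 6)) = 3 := by decide
      omega
    simp only [mul_sub, map_add, map_sub, map_zero, coeffHom_apply] at hv
    rw [term_low q3 [] hb3 (by decide) hwv,
        term_cross q3 [1,2,0] [4] u (by decide) (by decide),
        term_low q1' [2,0] hb1 (by decide) hwv,
        coeff_mul_W_eq q1' [4] u,
        term_low q2' [0] hb2 (by decide) hwv,
        term_cross q2' [5,2,0] [4] u (by decide) (by decide),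
        term_low q3' [] hb4 (by decide) hwv,
        term_cross q3' [3,0] [4] u (by decide) (by decide)] at hv
    simp only [sub_zero, zero_sub, add_zero, zero_add, neg_eq_zero] at hv
    exact Finsupp.mem_support_iff.mp hu hv
  · have hv := congrArg (coeffHom (K := K) (u * FreeMonoid.ofList [5,2,0])) h
    have hwv : wt (FreeMonoid.toList (u * FreeMonoid.ofList ([5,2,0] : List (Fin 6)))) = N := by
      rw [show FreeMonoid.toList (u * FreeMonoid.ofList ([5,2,0] : List (Fin 6)))
          = FreeMonoid.toList u ++ [5,2,0] from rfl, wt_append]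
      have : wt ([5,2,0] : List (Fin 6)) = 3 := by decide
      omega
    simp only [mul_sub, map_add, map_sub, map_zero, coeffHom_apply] at hv
    rw [term_low q3 [] hb3 (by decide) hwv,
        term_cross q3 [1,2,0] [5,2,0] u (by decide) (by decide),
        term_low q1' [2,0] hb1 (by decide) hwv,
        term_cross q1' [4] [5,2,0] u (by decide) (by decide),
        term_low q2' [0] hb2 (by decide) hwv,
        coeff_mul_W_eq q2' [5,2,0] u,
        term_low q3' [] hb4 (by decide) hwv,
        term_cross q3' [3,0] [5,2,0] u (by decide) (by decide)] at hv
    simp only [sub_zero, zero_sub, add_zero, zero_add, neg_eq_zero] at hv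
    exact Finsupp.mem_support_iff.mp hu hv
  · have hv := congrArg (coeffHom (K := K) (u * FreeMonoid.ofList [3,0])) h
    have hwv : wt (FreeMonoid.toList (u * FreeMonoid.ofList ([3,0] : List (Fin 6)))) = N := by
      rw [show FreeMonoid.toList (u * FreeMonoid.ofList ([3,0] : List (Fin 6)))
          = FreeMonoid.toList u ++ [3,0] from rfl, wt_append]
      have : wt ([3,0] : List (Fin 6)) = 2 := by decide
      omega
    simp only [mul_sub, map_add, map_sub, map_zero, coeffHom_apply] at hv
    rw [term_low q3 [] hb3 (by decide) hwv,
        term_cross q3 [1,2,0] [3,0] u (by decide) (by decide),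
        term_low q1' [2,0] hb1 (by decide) hwv,
        term_cross q1' [4] [3,0] u (by decide) (by decide),
        term_low q2' [0] hb2 (by decide) hwv,
        term_cross q2' [5,2,0] [3,0] u (by decide) (by decide),
        term_low q3' [] hb4 (by decide) hwv,
        coeff_mul_W_eq q3' [3,0] u] at hv
    simp only [sub_zero, zero_sub, add_zero, zero_add, neg_eq_zero] at hv
    exact Finsupp.mem_support_iff.mp hu hv

end

end Stmt0Aux

section

open Stmt0Aux

/-- Proposition 2.1: in the free associative algebra `K⟨D₁,…,D₃'⟩` (generators indexed
`0 ↦ D₁, 1 ↦ D₂, 2 ↦ D₃, 3 ↦ D₁', 4 ↦ D₂', 5 ↦ D₃'`), the equation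
`q₃(1 − D₂D₃D₁) + q₁'(D₃D₁ − D₂') + q₂'(D₁ − D₃'D₃D₁) + q₃'(1 − D₁'D₁) = 0`
forces all four unknowns to vanish. -/
theorem stmt_0 (K : Type*) [Field K]
    (q3 q1' q2' q3' : FreeAlgebra K (Fin 6))
    (h : q3 * (1 - FreeAlgebra.ι K 1 * FreeAlgebra.ι K 2 * FreeAlgebra.ι K 0)
        + q1' * (FreeAlgebra.ι K 2 * FreeAlgebra.ι K 0 - FreeAlgebra.ι K 4)
        + q2' * (FreeAlgebra.ι K 0
            - FreeAlgebra.ι K 5 * FreeAlgebra.ι K 2 * FreeAlgebra.ι K 0)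
        + q3' * (1 - FreeAlgebra.ι K 3 * FreeAlgebra.ι K 0) = 0) :
    q3 = 0 ∧ q1' = 0 ∧ q2' = 0 ∧ q3' = 0 := by
  classical
  set e : FreeAlgebra K (Fin 6) ≃ₐ[K] MonoidAlgebra K M6 :=
    FreeAlgebra.equivMonoidAlgebraFreeMonoid with he
  have hι : ∀ i : Fin 6, e (FreeAlgebra.ι K i)
      = MonoidAlgebra.single (FreeMonoid.of i) (1 : K) := by
    intro i
    simp [he, FreeAlgebra.equivMonoidAlgebraFreeMonoid, MonoidAlgebra.of_apply]
  have hW : ∀ l : List (Fin 6), ∀ i : Fin 6,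
      W K l * MonoidAlgebra.single (FreeMonoid.of i) (1 : K) = W K (l ++ [i]) := by
    intro l i
    rw [W, W, MonoidAlgebra.single_mul_single, one_mul]
    rfl
  have h2 := congrArg e h
  simp only [map_add, map_mul, map_sub, map_one, map_zero, hι] at h2
  have e1 : MonoidAlgebra.single (FreeMonoid.of (1 : Fin 6)) (1:K)
      * MonoidAlgebra.single (FreeMonoid.of (2 : Fin 6)) (1:K)
      * MonoidAlgebra.single (FreeMonoid.of (0 : Fin 6)) (1:K) = W K [1,2,0] := by
    rw [show MonoidAlgebra.single (FreeMonoid.of (1 : Fin 6)) (1:K) = W K [1] from rfl,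
      hW, hW]
    rfl
  have e2 : MonoidAlgebra.single (FreeMonoid.of (2 : Fin 6)) (1:K)
      * MonoidAlgebra.single (FreeMonoid.of (0 : Fin 6)) (1:K) = W K [2,0] := by
    rw [show MonoidAlgebra.single (FreeMonoid.of (2 : Fin 6)) (1:K) = W K [2] from rfl, hW]
    rfl
  have e3 : MonoidAlgebra.single (FreeMonoid.of (5 : Fin 6)) (1:K)
      * MonoidAlgebra.single (FreeMonoid.of (2 : Fin 6)) (1:K)
      * MonoidAlgebra.single (FreeMonoid.of (0 : Fin 6)) (1:K) = W K [5,2,0] := by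
    rw [show MonoidAlgebra.single (FreeMonoid.of (5 : Fin 6)) (1:K) = W K [5] from rfl,
      hW, hW]
    rfl
  have e4 : MonoidAlgebra.single (FreeMonoid.of (3 : Fin 6)) (1:K)
      * MonoidAlgebra.single (FreeMonoid.of (0 : Fin 6)) (1:K) = W K [3,0] := by
    rw [show MonoidAlgebra.single (FreeMonoid.of (3 : Fin 6)) (1:K) = W K [3] from rfl, hW]
    rfl
  rw [e1, e2, e3, e4,
    show MonoidAlgebra.single (FreeMonoid.of (4 : Fin 6)) (1:K) = W K [4] from rfl,
    show MonoidAlgebra.single (FreeMonoid.of (0 : Fin 6)) (1:K) = W K [0] from rfl] at h2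
  obtain ⟨h3, h1', h2', h3'⟩ := Stmt0Aux.main (e q3) (e q1') (e q2') (e q3') h2
  refine ⟨?_, ?_, ?_, ?_⟩ <;>
    [exact e.injective (by rw [h3, map_zero]);
     exact e.injective (by rw [h1', map_zero]);
     exact e.injective (by rw [h2', map_zero]);
     exact e.injective (by rw [h3', map_zero])]

end
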